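/- If k and j are integers one of which is ≥ 0 and the other is < 0, then K₋ₖ ∘ W ∘ K₋ⱼ = 0. -/

import Mathlib

open Complex MeasureTheory

/-- The `j`-th Laurent coefficient `K_j = (2πi)⁻¹ ∮_{|v|=r} v^(-j) R(v) dv` of the
resolvent function `R`. -/
noncomputable def laurentK {H : Type*} [NormedAddCommGroup H] [NormedSpace ℂ H]
    (R : ℂ → (H →L[ℂ] H)) (r : ℝ) (j : ℤ) : H →L[ℂ] H :=
  (2 * (Real.pi : ℂ) * Complex.I)⁻¹ • ∮ v in C(0, r), v ^ (-j) • R v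

open Metric Set

section Aux
variable {A : Type*} [NormedRing A] [NormedAlgebra ℂ A] [CompleteSpace A]

lemma aux_const_mul_circleIntegral (T : A) (f : ℂ → A) (c : ℂ) (R : ℝ)
    (hf : CircleIntegrable f c R) :
    T * (∮ z in C(c, R), f z) = ∮ z in C(c, R), T * f z := by
  let L : A →L[ℂ] A := ContinuousLinearMap.mul ℂ A T
  have hL : ∀ x, L x = T * x := fun _ => rfl
  calc T * (∮ z in C(c, R), f z)
      = L (∫ θ in (0:ℝ)..(2*Real.pi), deriv (circleMap c R) θ • f (circleMap c R θ)) := rfl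
    _ = ∫ θ in (0:ℝ)..(2*Real.pi), L (deriv (circleMap c R) θ • f (circleMap c R θ)) :=
        (L.intervalIntegral_comp_comm hf.out).symm
    _ = ∮ z in C(c, R), T * f z := by
        refine intervalIntegral.integral_congr fun θ _ => ?_
        simp [hL, mul_smul_comm]

lemma aux_circleIntegral_mul_const (T : A) (f : ℂ → A) (c : ℂ) (R : ℝ)
    (hf : CircleIntegrable f c R) :
    (∮ z in C(c, R), f z) * T = ∮ z in C(c, R), f z * T := by
  let L : A →L[ℂ] A := (ContinuousLinearMap.mul ℂ A).flip T
  have hL : ∀ x, L x = x * T := fun _ => rfl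
  calc (∮ z in C(c, R), f z) * T
      = L (∫ θ in (0:ℝ)..(2*Real.pi), deriv (circleMap c R) θ • f (circleMap c R θ)) := rfl
    _ = ∫ θ in (0:ℝ)..(2*Real.pi), L (deriv (circleMap c R) θ • f (circleMap c R θ)) :=
        (L.intervalIntegral_comp_comm hf.out).symm
    _ = ∮ z in C(c, R), f z * T := by
        refine intervalIntegral.integral_congr fun θ _ => ?_
        simp [hL, smul_mul_assoc]

end Aux

lemma aux_pf_identity {z c : ℂ} (hz : z ≠ 0) (hc : c ≠ 0) (hzc : z ≠ c) (n : ℤ) :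
    z ^ (n - 1) * (z - c)⁻¹
      = c⁻¹ * (z ^ n * (z - c)⁻¹ - z ^ (n - 1)) := by
  have hsub : z - c ≠ 0 := sub_ne_zero.mpr hzc
  have hu : z ^ n ≠ 0 := zpow_ne_zero n hz
  rw [zpow_sub_one₀ hz]
  field_simp
  ring

section Scalar
variable {R : ℝ} {a : ℂ}

lemma aux_sphere_facts (hR : 0 < R) (haR : ‖a‖ ≠ R) :
    ∀ z ∈ sphere (0:ℂ) R, z ≠ 0 ∧ z ≠ a := by
  intro z hz
  rw [mem_sphere_zero_iff_norm] at hz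
  constructor
  · intro h; rw [h] at hz; simp at hz; exact hR.ne' hz.symm
  · intro h; rw [h] at hz; exact haR hz

lemma aux_scalar_integrable (hR : 0 < R) (haR : ‖a‖ ≠ R) (m : ℤ) :
    CircleIntegrable (fun z => z ^ m * (z - a)⁻¹) 0 R := by
  refine ContinuousOn.circleIntegrable hR.le ?_
  intro z hz
  obtain ⟨hz0, hza⟩ := aux_sphere_facts hR haR z hz
  exact ((continuousAt_zpow₀ z m (Or.inl hz0)).mul
    (((continuousAt_id.sub continuousAt_const).inv₀ (sub_ne_zero.mpr hza)))).continuousWithinAt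

lemma aux_zpow_integral_zero (hR : 0 < R) {m : ℤ} (hm : m ≠ -1) :
    (∮ z in C(0, R), z ^ m) = 0 := by
  have : EqOn (fun z : ℂ => z ^ m) (fun z => (z - 0) ^ m) (sphere (0:ℂ) R) := by
    intro z _; simp
  rw [circleIntegral.integral_congr hR.le this]
  exact circleIntegral.integral_sub_zpow_of_ne hm _ _ _

lemma aux_zpow_neg_one (hR : 0 < R) :
    (∮ z in C(0, R), z ^ (-1 : ℤ)) = 2 * Real.pi * I := by
  have : EqOn (fun z : ℂ => z ^ (-1:ℤ)) (fun z => (z - 0)⁻¹) (sphere (0:ℂ) R) := by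
    intro z _; simp
  rw [circleIntegral.integral_congr hR.le this]
  exact circleIntegral.integral_sub_inv_of_mem_ball (by simpa [mem_ball_zero_iff] using hR)

/-- The scalar integral `∮_{|z|=R} z^n (z-a)⁻¹ dz` for `a` inside the circle. -/
lemma aux_scalar_inside (ha : a ≠ 0) (haR : ‖a‖ < R) (n : ℤ) :
    (∮ z in C(0, R), z ^ n * (z - a)⁻¹)
      = if 0 ≤ n then (2 * Real.pi * I) * a ^ n else 0 := by
  have hR : 0 < R := lt_of_le_of_lt (norm_nonneg a) haR
  have haball : a ∈ ball (0:ℂ) R := by simpa [mem_ball_zero_iff] using haR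
  have hsphere := aux_sphere_facts hR haR.ne
  rcases le_or_gt 0 n with hn | hn
  · rw [if_pos hn]
    lift n to ℕ using hn
    have hd : DiffContOnCl ℂ (fun z : ℂ => z ^ n) (ball (0:ℂ) R) :=
      Differentiable.diffContOnCl (by fun_prop)
    have h := hd.circleIntegral_sub_inv_smul haball
    have hrhs : (2 * (Real.pi:ℂ) * I) * a ^ (n:ℤ) = (2 * (Real.pi:ℂ) * I) • a ^ n := by
      simp [smul_eq_mul, zpow_natCast]
    rw [hrhs, ← h]
    refine circleIntegral.integral_congr hR.le fun z _ => ?_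
    simp [smul_eq_mul, mul_comm, zpow_natCast]
  · rw [if_neg (not_le.mpr hn)]
    have key : ∀ n : ℤ, n ≤ -1 → (∮ z in C(0, R), z ^ n * (z - a)⁻¹) = 0 := by
      refine Int.le_induction_down ?_ ?_
      · -- n = -1
        have hcongr : EqOn (fun z : ℂ => z ^ (-1:ℤ) * (z - a)⁻¹)
            (fun z => a⁻¹ * (z ^ (0:ℤ) * (z - a)⁻¹ - z ^ (-1:ℤ))) (sphere (0:ℂ) R) := by
          intro z hz
          have := aux_pf_identity (hsphere z hz).1 ha (hsphere z hz).2 0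
          simpa using this
        rw [circleIntegral.integral_congr hR.le hcongr, circleIntegral.integral_const_mul]
        have h1 : (∮ z in C(0, R), z ^ (0:ℤ) * (z - a)⁻¹) = 2 * Real.pi * I := by
          have : EqOn (fun z : ℂ => z ^ (0:ℤ) * (z - a)⁻¹) (fun z => (z - a)⁻¹)
              (sphere (0:ℂ) R) := by intro z _; simp
          rw [circleIntegral.integral_congr hR.le this]
          exact circleIntegral.integral_sub_inv_of_mem_ball haball
        have h2 := aux_zpow_neg_one hR
        rw [circleIntegral.integral_sub (aux_scalar_integrable hR haR.ne 0) ?_, h1, h2,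
          sub_self, mul_zero]
        refine ContinuousOn.circleIntegrable hR.le ?_
        intro z hz
        exact (continuousAt_zpow₀ z _ (Or.inl (hsphere z hz).1)).continuousWithinAt
      · intro n hn ih
        have hcongr : EqOn (fun z : ℂ => z ^ (n-1) * (z - a)⁻¹)
            (fun z => a⁻¹ * (z ^ n * (z - a)⁻¹ - z ^ (n-1))) (sphere (0:ℂ) R) := fun z hz =>
          aux_pf_identity (hsphere z hz).1 ha (hsphere z hz).2 n
        rw [circleIntegral.integral_congr hR.le hcongr, circleIntegral.integral_const_mul]
        have h2 : (∮ z in C(0, R), z ^ (n-1)) = 0 := aux_zpow_integral_zero hR (by omega)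
        rw [circleIntegral.integral_sub (aux_scalar_integrable hR haR.ne n) ?_, ih, h2,
          sub_self, mul_zero]
        refine ContinuousOn.circleIntegrable hR.le ?_
        intro z hz
        exact (continuousAt_zpow₀ z _ (Or.inl (hsphere z hz).1)).continuousWithinAt
    exact key n (by omega)

/-- The scalar integral `∮_{|z|=R} z^n (z-b)⁻¹ dz` for `b` outside the circle. -/
lemma aux_scalar_outside (hR : 0 < R) {b : ℂ} (hb : R < ‖b‖) (n : ℤ) :
    (∮ z in C(0, R), z ^ n * (z - b)⁻¹)
      = if n < 0 then -(2 * Real.pi * I) * b ^ n else 0 := by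
  have hb0 : b ≠ 0 := by intro h; rw [h] at hb; simp at hb; exact absurd hb (not_lt.mpr hR.le)
  have hsphere := aux_sphere_facts hR (by intro h; rw [h] at hb; exact lt_irrefl _ hb) (a := b)
  have hball : ∀ z ∈ closedBall (0:ℂ) R, z - b ≠ 0 := by
    intro z hz
    rw [mem_closedBall_zero_iff] at hz
    intro h
    rw [sub_eq_zero] at h
    rw [h] at hz; exact absurd (lt_of_lt_of_le hb hz) (lt_irrefl _)
  rcases le_or_gt 0 n with hn | hn
  · rw [if_neg (not_lt.mpr hn)]
    lift n to ℕ using hn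
    refine circleIntegral_eq_zero_of_differentiable_on_off_countable hR.le countable_empty ?_ ?_
    · intro z hz
      exact ((continuousAt_zpow₀ z _ (Or.inr (by positivity))).mul
        ((continuousAt_id.sub continuousAt_const).inv₀ (hball z hz))).continuousWithinAt
    · intro z hz
      refine DifferentiableAt.mul ?_ ?_
      · exact (differentiableAt_zpow.mpr (Or.inr (by positivity)))
      · exact ((differentiableAt_id.sub (differentiableAt_const b)).inv
          (hball z (ball_subset_closedBall hz.1)))
  · rw [if_pos hn]
    have key : ∀ n : ℤ, n ≤ -1 →
        (∮ z in C(0, R), z ^ n * (z - b)⁻¹) = -(2 * Real.pi * I) * b ^ n := by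
      refine Int.le_induction_down ?_ ?_
      · have hcongr : EqOn (fun z : ℂ => z ^ (-1:ℤ) * (z - b)⁻¹)
            (fun z => b⁻¹ * (z ^ (0:ℤ) * (z - b)⁻¹ - z ^ (-1:ℤ))) (sphere (0:ℂ) R) := by
          intro z hz
          have := aux_pf_identity (hsphere z hz).1 hb0 (hsphere z hz).2 0
          simpa using this
        rw [circleIntegral.integral_congr hR.le hcongr, circleIntegral.integral_const_mul]
        have h1 : (∮ z in C(0, R), z ^ (0:ℤ) * (z - b)⁻¹) = 0 := by
          have heq : EqOn (fun z : ℂ => z ^ (0:ℤ) * (z - b)⁻¹) (fun z => (z - b)⁻¹)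
              (sphere (0:ℂ) R) := by intro z _; simp
          rw [circleIntegral.integral_congr hR.le heq]
          refine circleIntegral_eq_zero_of_differentiable_on_off_countable hR.le
            countable_empty ?_ ?_
          · intro z hz
            exact ((continuousAt_id.sub continuousAt_const).inv₀ (hball z hz)).continuousWithinAt
          · intro z hz
            exact ((differentiableAt_id.sub (differentiableAt_const b)).inv
              (hball z (ball_subset_closedBall hz.1)))
        have h2 := aux_zpow_neg_one (R := R) hR
        rw [circleIntegral.integral_sub ?_ ?_, h1, h2]
        · simp [zpow_neg]; ring
        · refine ContinuousOn.circleIntegrable hR.le ?_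
          intro z hz
          exact ((continuousAt_zpow₀ z _ (Or.inr le_rfl)).mul
            ((continuousAt_id.sub continuousAt_const).inv₀
              (hball z (sphere_subset_closedBall hz)))).continuousWithinAt
        · refine ContinuousOn.circleIntegrable hR.le ?_
          intro z hz
          exact (continuousAt_zpow₀ z _ (Or.inl (hsphere z hz).1)).continuousWithinAt
      · intro n hn ih
        have hcongr : EqOn (fun z : ℂ => z ^ (n-1) * (z - b)⁻¹)
            (fun z => b⁻¹ * (z ^ n * (z - b)⁻¹ - z ^ (n-1))) (sphere (0:ℂ) R) := fun z hz =>
          aux_pf_identity (hsphere z hz).1 hb0 (hsphere z hz).2 n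
        rw [circleIntegral.integral_congr hR.le hcongr, circleIntegral.integral_const_mul]
        have h2 : (∮ z in C(0, R), z ^ (n-1)) = 0 := aux_zpow_integral_zero hR (by omega)
        have hint : CircleIntegrable (fun z => z ^ n * (z - b)⁻¹) 0 R := by
          refine ContinuousOn.circleIntegrable hR.le ?_
          intro z hz
          exact ((continuousAt_zpow₀ z n (Or.inl (hsphere z hz).1)).mul
            ((continuousAt_id.sub continuousAt_const).inv₀
              (hball z (sphere_subset_closedBall hz)))).continuousWithinAt
        rw [circleIntegral.integral_sub hint ?_, ih, h2, sub_zero]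
        · rw [zpow_sub_one₀ hb0]; ring
        · refine ContinuousOn.circleIntegrable hR.le ?_
          intro z hz
          exact (continuousAt_zpow₀ z _ (Or.inl (hsphere z hz).1)).continuousWithinAt
    exact key n (by omega)

end Scalar

section Fubini
variable {A : Type*} [NormedAddCommGroup A] [NormedSpace ℂ A]
set_option linter.unusedSectionVars false

lemma aux_deriv_circleMap_continuous (c : ℂ) (R : ℝ) :
    Continuous (fun θ : ℝ => deriv (circleMap c R) θ) := by
  have : (fun θ : ℝ => deriv (circleMap c R) θ) = fun θ => circleMap 0 R θ * I :=
    funext (deriv_circleMap c R)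
  rw [this]
  exact (continuous_circleMap 0 R).mul continuous_const

/-- Fubini for a double circle integral with a kernel continuous along the two circles. -/
lemma aux_circleIntegral_swap (X : ℂ → ℂ → A) (ρ R : ℝ)
    (hX : Continuous fun p : ℝ × ℝ => X (circleMap 0 ρ p.1) (circleMap 0 R p.2)) :
    (∮ v in C(0, ρ), ∮ w in C(0, R), X v w) = ∮ w in C(0, R), ∮ v in C(0, ρ), X v w := by
  have h2π : (0:ℝ) ≤ 2 * Real.pi := Real.two_pi_pos.le
  set F : ℝ → ℝ → A := fun θ φ =>
    deriv (circleMap 0 ρ) θ • deriv (circleMap 0 R) φ • X (circleMap 0 ρ θ) (circleMap 0 R φ)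
    with hF
  have hFc : Continuous (Function.uncurry F) := by
    refine Continuous.smul ((aux_deriv_circleMap_continuous 0 ρ).comp continuous_fst) ?_
    exact Continuous.smul ((aux_deriv_circleMap_continuous 0 R).comp continuous_snd) hX
  have hL : (∮ v in C(0, ρ), ∮ w in C(0, R), X v w)
      = ∫ θ in (0:ℝ)..(2*Real.pi), ∫ φ in (0:ℝ)..(2*Real.pi), F θ φ := by
    rw [circleIntegral]
    refine intervalIntegral.integral_congr fun θ _ => ?_
    rw [circleIntegral, ← intervalIntegral.integral_smul]
  have hR' : (∮ w in C(0, R), ∮ v in C(0, ρ), X v w)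
      = ∫ φ in (0:ℝ)..(2*Real.pi), ∫ θ in (0:ℝ)..(2*Real.pi), F θ φ := by
    rw [circleIntegral]
    refine intervalIntegral.integral_congr fun φ _ => ?_
    rw [circleIntegral, ← intervalIntegral.integral_smul]
    refine intervalIntegral.integral_congr fun θ _ => ?_
    simp only [hF]
    rw [smul_comm]
  rw [hL, hR']
  -- now swap the interval integrals
  have hint : Integrable (Function.uncurry F)
      ((volume.restrict (Ioc (0:ℝ) (2*Real.pi))).prod
        (volume.restrict (Ioc (0:ℝ) (2*Real.pi)))) := by
    rw [Measure.prod_restrict, ← Measure.volume_eq_prod]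
    exact (hFc.continuousOn.integrableOn_compact (isCompact_Icc.prod isCompact_Icc)).mono_set
      (Set.prod_mono Ioc_subset_Icc_self Ioc_subset_Icc_self)
  calc (∫ θ in (0:ℝ)..(2*Real.pi), ∫ φ in (0:ℝ)..(2*Real.pi), F θ φ)
      = ∫ θ in Ioc (0:ℝ) (2*Real.pi), ∫ φ in Ioc (0:ℝ) (2*Real.pi), F θ φ := by
        rw [intervalIntegral.integral_of_le h2π]
        refine setIntegral_congr_fun measurableSet_Ioc fun θ _ => ?_
        rw [intervalIntegral.integral_of_le h2π]
    _ = ∫ φ in Ioc (0:ℝ) (2*Real.pi), ∫ θ in Ioc (0:ℝ) (2*Real.pi), F θ φ :=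
        integral_integral_swap hint
    _ = ∫ φ in (0:ℝ)..(2*Real.pi), ∫ θ in (0:ℝ)..(2*Real.pi), F θ φ := by
        rw [intervalIntegral.integral_of_le h2π]
        refine setIntegral_congr_fun measurableSet_Ioc fun φ _ => ?_
        rw [intervalIntegral.integral_of_le h2π]

/-- A parametrized circle integral of a continuous kernel is circle integrable. -/
lemma aux_circleIntegrable_parametric (X : ℂ → ℂ → A) (ρ R : ℝ)
    (hX : Continuous fun p : ℝ × ℝ => X (circleMap 0 ρ p.1) (circleMap 0 R p.2)) :
    CircleIntegrable (fun v => ∮ w in C(0, R), X v w) 0 ρ := by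
  have hc : Continuous fun θ : ℝ => ∮ w in C(0, R), X (circleMap 0 ρ θ) w := by
    have := intervalIntegral.continuous_parametric_intervalIntegral_of_continuous'
      (μ := volume)
      (f := fun θ φ => deriv (circleMap 0 R) φ • X (circleMap 0 ρ θ) (circleMap 0 R φ))
      ?_ 0 (2*Real.pi)
    · exact this
    · refine Continuous.smul ((aux_deriv_circleMap_continuous 0 R).comp continuous_snd) ?_
      exact hX.comp (continuous_fst.prodMk continuous_snd)
  exact hc.intervalIntegrable 0 (2*Real.pi)

end Fubini


lemma aux_circleIntegral_zero {A : Type*} [NormedAddCommGroup A] [NormedSpace ℂ A]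
    (c : ℂ) (R : ℝ) : (∮ _z in C(c, R), (0:A)) = 0 := by
  simp [circleIntegral]

lemma aux_circleIntegral_neg {A : Type*} [NormedAddCommGroup A] [NormedSpace ℂ A]
    (f : ℂ → A) (c : ℂ) (R : ℝ) :
    (∮ z in C(c, R), -f z) = -∮ z in C(c, R), f z := by
  simp only [circleIntegral, smul_neg]
  exact intervalIntegral.integral_neg

/-- If `k` and `j` are integers one of which is `≥ 0` and the other `< 0`,
then `K₋ₖ ∘ W ∘ K₋ⱼ = 0`. -/
theorem laurentK_comp_perturbation_comp_laurentK_eq_zero_of_mixed_signs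
    {H : Type*} [NormedAddCommGroup H] [InnerProductSpace ℂ H] [CompleteSpace H]
    (N₀ W : H →L[ℂ] H) (z₀ : ℂ) (r : ℝ) (hr : 0 < r)
    (R : ℂ → (H →L[ℂ] H))
    (hR : ∀ v : ℂ, v ≠ 0 → ‖v‖ ≤ r →
      (N₀ + v • W - z₀ • (1 : H →L[ℂ] H)) * R v = 1 ∧
      R v * (N₀ + v • W - z₀ • (1 : H →L[ℂ] H)) = 1)
    (k j : ℤ) (hkj : (0 ≤ k ∧ j < 0) ∨ (k < 0 ∧ 0 ≤ j)) :
    laurentK R r (-k) * W * laurentK R r (-j) = 0 := by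
  classical
  set N : ℂ → (H →L[ℂ] H) := fun v => N₀ + v • W - z₀ • (1 : H →L[ℂ] H) with hNdef
  set S : ℂ → (H →L[ℂ] H) := fun v => Ring.inverse (N v) with hSdef
  set ρ : ℝ := r / 2 with hρdef
  have hρ : 0 < ρ := by positivity
  have hρr : ρ < r := by rw [hρdef]; linarith
  have h2π : (0:ℝ) < 2 * Real.pi := Real.two_pi_pos
  -- basic facts about N and S
  have hNdiff : Differentiable ℂ N :=
    ((differentiable_const N₀).add (differentiable_id.smul_const W)).sub (differentiable_const _)
  have hgood : ∀ v : ℂ, v ≠ 0 → ‖v‖ ≤ r → IsUnit (N v) := fun v h1 h2 =>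
    ⟨⟨N v, R v, (hR v h1 h2).1, (hR v h1 h2).2⟩, rfl⟩
  have hSR : ∀ v : ℂ, v ≠ 0 → ‖v‖ ≤ r → S v = R v := fun v h1 h2 =>
    Ring.inverse_unit ⟨N v, R v, (hR v h1 h2).1, (hR v h1 h2).2⟩
  have hSdiff : ∀ v : ℂ, v ≠ 0 → ‖v‖ ≤ r → DifferentiableAt ℂ S v := fun v h1 h2 =>
    (hNdiff v).inverse (hgood v h1 h2)
  have hScont : ∀ v : ℂ, v ≠ 0 → ‖v‖ ≤ r → ContinuousAt S v := fun v h1 h2 =>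
    (hSdiff v h1 h2).continuousAt
  -- facts about points on spheres
  have hsph : ∀ σ : ℝ, 0 < σ → σ ≤ r → ∀ z ∈ sphere (0:ℂ) σ, z ≠ 0 ∧ ‖z‖ ≤ r := by
    intro σ h1 h2 z hz
    rw [mem_sphere_zero_iff_norm] at hz
    exact ⟨by intro h; rw [h] at hz; simp at hz; exact h1.ne' hz.symm, hz ▸ h2⟩
  -- resolvent identity
  have hres : ∀ v : ℂ, v ≠ 0 → ‖v‖ ≤ r → ∀ w : ℂ, w ≠ 0 → ‖w‖ ≤ r → w ≠ v →
      S v * W * S w = (w - v)⁻¹ • (S v - S w) := by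
    intro v hv1 hv2 w hw1 hw2 hwv
    have hSv := hR v hv1 hv2
    have hSw := hR w hw1 hw2
    rw [hSR v hv1 hv2, hSR w hw1 hw2]
    have hNN : N w - N v = (w - v) • W := by
      rw [hNdef]
      simp only [sub_smul]
      abel
    have key : R v - R w = (w - v) • (R v * W * R w) := by
      have h1 : R v * (N w * R w) = R v := by rw [hSw.1, mul_one]
      have h2 : R v * N v * R w = R w := by rw [hSv.2, one_mul]
      calc R v - R w = R v * (N w * R w) - R v * N v * R w := by rw [h1, h2]
        _ = (R v * (N w - N v)) * R w := by noncomm_ring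
        _ = (R v * ((w - v) • W)) * R w := by rw [hNN]
        _ = (w - v) • (R v * W * R w) := by
            rw [mul_smul_comm, smul_mul_assoc]
    rw [key, inv_smul_smul₀ (sub_ne_zero.mpr hwv)]
  -- integrability of the basic integrand
  have hint1 : ∀ (m : ℤ) (σ : ℝ), 0 < σ → σ ≤ r →
      CircleIntegrable (fun z => z ^ m • S z) 0 σ := by
    intro m σ h1 h2
    refine ContinuousOn.circleIntegrable h1.le ?_
    intro z hz
    obtain ⟨hz1, hz2⟩ := hsph σ h1 h2 z hz
    exact ((continuousAt_zpow₀ z m (Or.inl hz1)).smul (hScont z hz1 hz2)).continuousWithinAt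
  -- radius independence
  have hradius : ∀ m : ℤ,
      (∮ z in C(0, r), z ^ m • S z) = ∮ z in C(0, ρ), z ^ m • S z := by
    intro m
    refine circleIntegral_eq_of_differentiable_on_annulus_off_countable hρ hρr.le
      countable_empty ?_ ?_
    · intro z hz
      obtain ⟨hz1, hz2⟩ := hz
      rw [mem_closedBall_zero_iff] at hz1
      rw [mem_ball_zero_iff, not_lt] at hz2
      have hz0 : z ≠ 0 := by
        intro h; rw [h] at hz2; simp at hz2; exact absurd (lt_of_le_of_lt hz2 hρ) (lt_irrefl _)
      exact (((continuousAt_zpow₀ z m (Or.inl hz0)).smul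
        (hScont z hz0 hz1))).continuousWithinAt
    · intro z hz
      obtain ⟨⟨hz1, hz2⟩, -⟩ := hz
      rw [mem_ball_zero_iff] at hz1
      rw [mem_closedBall_zero_iff, not_le] at hz2
      have hz0 : z ≠ 0 := by
        intro h; rw [h] at hz2; simp at hz2; exact absurd (hz2.trans hρ) (lt_irrefl _)
      exact (differentiableAt_zpow.mpr (Or.inl hz0)).smul (hSdiff z hz0 hz1.le)
  -- replace R by S in the Laurent coefficients
  have hcongrR : ∀ m : ℤ, (∮ z in C(0, r), z ^ m • R z) = ∮ z in C(0, r), z ^ m • S z := by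
    intro m
    refine circleIntegral.integral_congr hr.le fun z hz => ?_
    obtain ⟨hz1, hz2⟩ := hsph r hr le_rfl z hz
    rw [hSR z hz1 hz2]
  -- abbreviations
  set Ik : H →L[ℂ] H := ∮ v in C(0, ρ), v ^ k • S v with hIkdef
  set Ij : H →L[ℂ] H := ∮ w in C(0, r), w ^ j • S w with hIjdef
  have hmain : Ik * W * Ij = 0 := by
    set Y : ℂ → ℂ → (H →L[ℂ] H) := fun v w => (w ^ j * (w - v)⁻¹) • S w with hYdef
    set Z : ℂ → ℂ → (H →L[ℂ] H) := fun v w => (v ^ k * (w ^ j * (w - v)⁻¹)) • S w with hZdef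
    have hcm_ne : ∀ (σ : ℝ), σ ≠ 0 → ∀ θ : ℝ, circleMap 0 σ θ ≠ 0 :=
      fun σ hσ θ => circleMap_ne_center hσ
    have hnorm_cm : ∀ (σ : ℝ), 0 ≤ σ → ∀ θ : ℝ, ‖circleMap 0 σ θ‖ = σ := by
      intro σ hσ θ
      rw [norm_circleMap_zero, _root_.abs_of_nonneg hσ]
    have hzp : ∀ (m : ℤ) (σ : ℝ), σ ≠ 0 → Continuous fun θ : ℝ => (circleMap 0 σ θ) ^ m := by
      intro m σ hσ
      rw [continuous_iff_continuousAt]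
      intro θ
      exact (continuousAt_zpow₀ _ m (Or.inl (hcm_ne σ hσ θ))).comp
        (continuous_circleMap 0 σ).continuousAt
    have hsc : Continuous fun θ : ℝ => S (circleMap 0 r θ) := by
      rw [continuous_iff_continuousAt]
      intro θ
      exact (hScont _ (hcm_ne r hr.ne' θ) (le_of_eq (hnorm_cm r hr.le θ))).comp
        (continuous_circleMap 0 r).continuousAt
    have hinv : Continuous fun p : ℝ × ℝ =>
        (circleMap 0 r p.2 - circleMap 0 ρ p.1)⁻¹ := by
      refine Continuous.inv₀ (((continuous_circleMap 0 r).comp continuous_snd).sub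
        ((continuous_circleMap 0 ρ).comp continuous_fst)) ?_
      intro p h
      rw [sub_eq_zero] at h
      have h2 := congrArg norm h
      rw [hnorm_cm r hr.le, hnorm_cm ρ hρ.le] at h2
      exact hρr.ne' h2
    have hZcont : Continuous fun p : ℝ × ℝ => Z (circleMap 0 ρ p.1) (circleMap 0 r p.2) :=
      Continuous.smul (Continuous.mul ((hzp k ρ hρ.ne').comp continuous_fst)
        (Continuous.mul ((hzp j r hr.ne').comp continuous_snd) hinv))
        (hsc.comp continuous_snd)
    have hIjint := hint1 j r hr le_rfl
    have hIkint := hint1 k ρ hρ hρr.le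
    -- the inner integral over w, for v on the inner circle
    have hinner : ∀ v ∈ sphere (0:ℂ) ρ,
        (S v * W) * Ij = (if 0 ≤ j then (2 * (Real.pi:ℂ) * I) * v ^ j else 0) • S v
          - ∮ w in C(0, r), Y v w := by
      intro v hv
      obtain ⟨hv1, hv2⟩ := hsph ρ hρ hρr.le v hv
      have hvρ : ‖v‖ = ρ := mem_sphere_zero_iff_norm.mp hv
      have hvr : ‖v‖ < r := by rw [hvρ]; exact hρr
      have hwv' : ∀ w ∈ sphere (0:ℂ) r, w ≠ v := by
        intro w hw h
        have h2 : ‖w‖ = ‖v‖ := by rw [h]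
        rw [mem_sphere_zero_iff_norm.mp hw, hvρ] at h2
        exact hρr.ne' h2
      have hptw : EqOn (fun w => (S v * W) * (w ^ j • S w))
          (fun w => (w ^ j * (w - v)⁻¹) • S v - Y v w) (sphere (0:ℂ) r) := by
        intro w hw
        obtain ⟨hw1, hw2⟩ := hsph r hr le_rfl w hw
        beta_reduce
        rw [mul_smul_comm, hres v hv1 hv2 w hw1 hw2 (hwv' w hw), smul_smul, smul_sub, hYdef]
      have hintA : CircleIntegrable (fun w => (w ^ j * (w - v)⁻¹) • S v) 0 r := by
        refine ContinuousOn.circleIntegrable hr.le ?_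
        intro w hw
        obtain ⟨hw1, hw2⟩ := hsph r hr le_rfl w hw
        exact (((continuousAt_zpow₀ w j (Or.inl hw1)).mul
          ((continuousAt_id.sub continuousAt_const).inv₀
            (sub_ne_zero.mpr (hwv' w hw)))).smul continuousAt_const).continuousWithinAt
      have hintB : CircleIntegrable (fun w => Y v w) 0 r := by
        refine ContinuousOn.circleIntegrable hr.le ?_
        intro w hw
        obtain ⟨hw1, hw2⟩ := hsph r hr le_rfl w hw
        exact (((continuousAt_zpow₀ w j (Or.inl hw1)).mul
          ((continuousAt_id.sub continuousAt_const).inv₀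
            (sub_ne_zero.mpr (hwv' w hw)))).smul (hScont w hw1 hw2)).continuousWithinAt
      rw [hIjdef, aux_const_mul_circleIntegral _ _ _ _ hIjint,
        circleIntegral.integral_congr hr.le hptw,
        circleIntegral.integral_sub hintA hintB,
        circleIntegral.integral_smul_const,
        aux_scalar_inside hv1 hvr j]
    have step1 : Ik * W * Ij = ∮ v in C(0, ρ), v ^ k • ((S v * W) * Ij) := by
      rw [mul_assoc, hIkdef, aux_circleIntegral_mul_const _ _ _ _ hIkint]
      refine circleIntegral.integral_congr hρ.le fun v _ => ?_
      beta_reduce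
      rw [smul_mul_assoc, mul_assoc]
    rw [step1]
    -- the vanishing inner v-integral / its value, for w on the outer circle
    have hZw : ∀ w ∈ sphere (0:ℂ) r, (∮ v in C(0, ρ), Z v w)
        = (if k < 0 then (2 * (Real.pi:ℂ) * I) * w ^ k else 0) • (w ^ j • S w) := by
      intro w hw
      have hwr : ‖w‖ = r := mem_sphere_zero_iff_norm.mp hw
      have hwρ : ρ < ‖w‖ := by rw [hwr]; exact hρr
      have hform : (fun v => Z v w) = fun v => (v ^ k * (w - v)⁻¹) • ((w ^ j) • S w) := by
        funext v
        rw [hZdef]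
        beta_reduce
        rw [smul_smul]
        congr 1
        ring
      have hneg : EqOn (fun v : ℂ => v ^ k * (w - v)⁻¹)
          (fun v => -(v ^ k * (v - w)⁻¹)) (sphere (0:ℂ) ρ) := by
        intro v _
        beta_reduce
        rw [show (w - v)⁻¹ = -(v - w)⁻¹ by rw [← inv_neg, neg_sub]]
        ring
      rw [hform, circleIntegral.integral_smul_const,
        circleIntegral.integral_congr hρ.le hneg, aux_circleIntegral_neg,
        aux_scalar_outside hρ hwρ k]
      rcases lt_or_ge k 0 with hk | hk
      · rw [if_pos hk, if_pos hk]
        congr 1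
        ring
      · rw [if_neg (not_lt.mpr hk), if_neg (not_lt.mpr hk), neg_zero, zero_smul]
    rcases hkj with ⟨hk, hj⟩ | ⟨hk, hj⟩
    · -- Case 1 : 0 ≤ k, j < 0
      have heq1 : EqOn (fun v => v ^ k • ((S v * W) * Ij))
          (fun v => -∮ w in C(0, r), Z v w) (sphere (0:ℂ) ρ) := by
        intro v hv
        beta_reduce
        rw [hinner v hv, if_neg (not_le.mpr hj), zero_smul, zero_sub, smul_neg]
        congr 1
        rw [← circleIntegral.integral_smul]
        refine circleIntegral.integral_congr hr.le fun w _ => ?_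
        beta_reduce
        rw [hYdef, hZdef]
        beta_reduce
        rw [smul_smul]
      rw [circleIntegral.integral_congr hρ.le heq1, aux_circleIntegral_neg,
        aux_circleIntegral_swap Z ρ r hZcont]
      have hz0 : EqOn (fun w => ∮ v in C(0, ρ), Z v w) (fun _ => (0 : H →L[ℂ] H))
          (sphere (0:ℂ) r) := by
        intro w hw
        beta_reduce
        rw [hZw w hw, if_neg (not_lt.mpr hk), zero_smul]
      rw [circleIntegral.integral_congr hr.le hz0, aux_circleIntegral_zero, neg_zero]
    · -- Case 2 : k < 0, 0 ≤ j
      have hQint : CircleIntegrable (fun v => ∮ w in C(0, r), Z v w) 0 ρ :=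
        aux_circleIntegrable_parametric Z ρ r hZcont
      have hPint : CircleIntegrable
          (fun v => (2 * (Real.pi:ℂ) * I) • (v ^ (k + j) • S v)) 0 ρ := by
        refine ContinuousOn.circleIntegrable hρ.le ?_
        intro z hz
        obtain ⟨hz1, hz2⟩ := hsph ρ hρ hρr.le z hz
        exact (((continuousAt_zpow₀ z (k+j) (Or.inl hz1)).smul
          (hScont z hz1 hz2)).const_smul (2 * (Real.pi:ℂ) * I)).continuousWithinAt
      have heq1 : EqOn (fun v => v ^ k • ((S v * W) * Ij))
          (fun v => (2 * (Real.pi:ℂ) * I) • (v ^ (k + j) • S v)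
            - ∮ w in C(0, r), Z v w) (sphere (0:ℂ) ρ) := by
        intro v hv
        obtain ⟨hv1, hv2⟩ := hsph ρ hρ hρr.le v hv
        beta_reduce
        rw [hinner v hv, if_pos hj, smul_sub]
        congr 1
        · rw [smul_smul, smul_smul]
          congr 1
          rw [zpow_add₀ hv1 k j]
          ring
        · rw [← circleIntegral.integral_smul]
          refine circleIntegral.integral_congr hr.le fun w _ => ?_
          beta_reduce
          rw [hYdef, hZdef]
          beta_reduce
          rw [smul_smul]
      rw [circleIntegral.integral_congr hρ.le heq1,
        circleIntegral.integral_sub hPint hQint,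
        circleIntegral.integral_smul, aux_circleIntegral_swap Z ρ r hZcont]
      have hz2 : EqOn (fun w => ∮ v in C(0, ρ), Z v w)
          (fun w => (2 * (Real.pi:ℂ) * I) • (w ^ (k + j) • S w)) (sphere (0:ℂ) r) := by
        intro w hw
        obtain ⟨hw1, hw2⟩ := hsph r hr le_rfl w hw
        beta_reduce
        rw [hZw w hw, if_pos hk, smul_smul, smul_smul]
        congr 1
        rw [zpow_add₀ hw1 k j]
        ring
      rw [circleIntegral.integral_congr hr.le hz2, circleIntegral.integral_smul,
        ← hradius (k + j), hradius (k + j), sub_self]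
  -- final assembly
  have hunfold : laurentK R r (-k) * W * laurentK R r (-j)
      = ((2 * (Real.pi : ℂ) * Complex.I)⁻¹ * (2 * (Real.pi : ℂ) * Complex.I)⁻¹)
        • (Ik * W * Ij) := by
    simp only [laurentK, neg_neg]
    rw [hcongrR k, hcongrR j, hradius k, ← hIkdef, ← hIjdef]
    rw [smul_mul_assoc, smul_mul_assoc, mul_smul_comm, smul_smul]
  rw [hunfold, hmain, smul_zero]
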